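/- Let $p\ge 1$ and $\alpha < p-1$, and let $f:(0,\infty)\to[0,\infty)$ be measurable. Then $\int_0^\infty \left(\frac{1}{x}\int_0^x f(t)\,dt\right)^p x^{\alpha}\,dx \le \left(\frac{p}{p-1-\alpha}\right)^p \int_0^\infty f(x)^p x^{\alpha}\,dx$. -/

import Mathlib

open MeasureTheory Set Real Function

lemma meas_ofReal_rpow (r : ℝ) : Measurable fun t : ℝ => ENNReal.ofReal (t ^ r) := by
  measurability

lemma lint_Ioi_rpow {t E : ℝ} (ht : 0 < t) (hE : E < -1) :
    ∫⁻ x in Ioi t, ENNReal.ofReal (x ^ E) = ENNReal.ofReal (t ^ (E + 1) / (-(E + 1))) := by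
  rw [← ofReal_integral_eq_lintegral_ofReal (integrableOn_Ioi_rpow_of_lt hE ht)
      ((ae_restrict_mem measurableSet_Ioi).mono fun x hx => Real.rpow_nonneg (ht.trans hx).le E)]
  rw [integral_Ioi_rpow_of_lt hE ht]
  rw [neg_div, div_neg]

lemma lint_Ioo_rpow {x r : ℝ} (hx : 0 < x) (hr : -1 < r) :
    ∫⁻ t in Ioo 0 x, ENNReal.ofReal (t ^ r) = ENNReal.ofReal (x ^ (r + 1) / (r + 1)) := by
  rw [Measure.restrict_congr_set Ioo_ae_eq_Ioc]
  have hint : IntegrableOn (fun t : ℝ => t ^ r) (Ioc 0 x) := by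
    have := intervalIntegral.intervalIntegrable_rpow' (a := 0) (b := x) hr
    rwa [intervalIntegrable_iff_integrableOn_Ioc_of_le hx.le] at this
  rw [← ofReal_integral_eq_lintegral_ofReal hint
      ((ae_restrict_mem measurableSet_Ioc).mono fun t htm => Real.rpow_nonneg htm.1.le r)]
  congr 1
  rw [← intervalIntegral.integral_of_le hx.le, integral_rpow (Or.inl hr),
    Real.zero_rpow (by linarith : r + 1 ≠ 0), sub_zero]

lemma swap_lemma (F : ℝ → ℝ → ENNReal) (hF : Measurable (uncurry F)) :
    ∫⁻ x in Ioi (0:ℝ), ∫⁻ t in Ioo 0 x, F x t = ∫⁻ t in Ioi (0:ℝ), ∫⁻ x in Ioi t, F x t := by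
  have hs : MeasurableSet {q : ℝ × ℝ | 0 < q.2 ∧ q.2 < q.1} :=
    (measurableSet_lt measurable_const measurable_snd).inter
      (measurableSet_lt measurable_snd measurable_fst)
  set G : ℝ × ℝ → ENNReal := {q : ℝ × ℝ | 0 < q.2 ∧ q.2 < q.1}.indicator (uncurry F) with hG
  have hGm : Measurable G := hF.indicator hs
  have h1 : ∀ x : ℝ, (∫⁻ t in Ioo 0 x, F x t) = ∫⁻ t, G (x, t) := by
    intro x
    rw [← lintegral_indicator measurableSet_Ioo]
    congr 1
  have h2 : ∀ t ∈ Ioi (0:ℝ), (∫⁻ x in Ioi t, F x t) = ∫⁻ x in Ioi (0:ℝ), G (x, t) := by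
    intro t ht
    rw [mem_Ioi] at ht
    have key : ∀ x, G (x, t) = (Ioi t).indicator (fun x => F x t) x := by
      intro x
      simp only [hG, indicator, mem_Ioi, mem_setOf_eq, uncurry]
      by_cases h : t < x <;> simp [h, ht]
    simp_rw [key]
    rw [lintegral_indicator measurableSet_Ioi, Measure.restrict_restrict measurableSet_Ioi,
      inter_eq_self_of_subset_left (Ioi_subset_Ioi ht.le)]
  have h3 : ∀ t : ℝ, t ∉ Ioi (0:ℝ) → (∫⁻ x in Ioi (0:ℝ), G (x, t)) = 0 := by
    intro t ht
    rw [mem_Ioi, not_lt] at ht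
    have : ∀ x, G (x, t) = 0 := fun x => by
      simp only [hG, indicator, mem_setOf_eq, uncurry]
      rw [if_neg]; intro h; exact absurd ht (not_le.2 h.1)
    simp [this]
  calc ∫⁻ x in Ioi (0:ℝ), ∫⁻ t in Ioo 0 x, F x t
      = ∫⁻ x in Ioi (0:ℝ), ∫⁻ t, G (x, t) := by simp_rw [h1]
    _ = ∫⁻ t, ∫⁻ x in Ioi (0:ℝ), G (x, t) := lintegral_lintegral_swap hGm.aemeasurable
    _ = ∫⁻ t in Ioi (0:ℝ), ∫⁻ x in Ioi (0:ℝ), G (x, t) := by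
        rw [← lintegral_indicator measurableSet_Ioi]
        congr 1 with t
        by_cases ht : t ∈ Ioi (0:ℝ)
        · rw [indicator_of_mem ht]
        · rw [indicator_of_notMem ht, h3 t ht]
    _ = ∫⁻ t in Ioi (0:ℝ), ∫⁻ x in Ioi t, F x t :=
        setLIntegral_congr_fun measurableSet_Ioi
          (fun t ht => (h2 t ht).symm)

lemma step2 (g : ℝ → ENNReal) (hg : Measurable g) {E : ℝ} (hE : E < -1) :
    ∫⁻ x in Ioi (0:ℝ), (∫⁻ t in Ioo 0 x, g t) * ENNReal.ofReal (x ^ E)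
      = ENNReal.ofReal (-(E + 1))⁻¹ * ∫⁻ t in Ioi (0:ℝ), g t * ENNReal.ofReal (t ^ (E + 1)) := by
  have hmeas : Measurable (uncurry fun (x t : ℝ) => g t * ENNReal.ofReal (x ^ E)) :=
    (hg.comp measurable_snd).mul ((meas_ofReal_rpow E).comp measurable_fst)
  have h1 : ∫⁻ x in Ioi (0:ℝ), (∫⁻ t in Ioo 0 x, g t) * ENNReal.ofReal (x ^ E)
      = ∫⁻ x in Ioi (0:ℝ), ∫⁻ t in Ioo 0 x, g t * ENNReal.ofReal (x ^ E) :=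
    setLIntegral_congr_fun measurableSet_Ioi
      (fun x _ => (lintegral_mul_const _ hg).symm)
  rw [h1, swap_lemma _ hmeas]
  have h2 : ∫⁻ t in Ioi (0:ℝ), ∫⁻ x in Ioi t, g t * ENNReal.ofReal (x ^ E)
      = ∫⁻ t in Ioi (0:ℝ), g t * ENNReal.ofReal (t ^ (E + 1)) * ENNReal.ofReal (-(E + 1))⁻¹ := by
    refine setLIntegral_congr_fun measurableSet_Ioi
      (fun t ht => ?_)
    rw [lintegral_const_mul _ (meas_ofReal_rpow E), lint_Ioi_rpow ht hE,
      div_eq_mul_inv, ENNReal.ofReal_mul (Real.rpow_nonneg ht.le _), mul_assoc]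
  rw [h2, lintegral_mul_const' _ _ ENNReal.ofReal_ne_top, mul_comm]

theorem hardy_weighted (p α : ℝ) (hp : 1 ≤ p) (hα : α < p - 1)
    (f : ℝ → ENNReal) (hf : Measurable f) :
    ∫⁻ x in Ioi (0:ℝ),
        ((ENNReal.ofReal x)⁻¹ * ∫⁻ t in Ioo (0:ℝ) x, f t) ^ p * ENNReal.ofReal (x ^ α)
      ≤ ENNReal.ofReal ((p / (p - 1 - α)) ^ p) *
          ∫⁻ x in Ioi (0:ℝ), f x ^ p * ENNReal.ofReal (x ^ α) := by
  rcases eq_or_lt_of_le hp with hp1 | hp1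
  · -- p = 1
    subst hp1
    have hα0 : α < 0 := by linarith
    have h1 : ∫⁻ x in Ioi (0:ℝ),
          ((ENNReal.ofReal x)⁻¹ * ∫⁻ t in Ioo (0:ℝ) x, f t) ^ (1:ℝ) * ENNReal.ofReal (x ^ α)
        = ∫⁻ x in Ioi (0:ℝ), (∫⁻ t in Ioo 0 x, f t) * ENNReal.ofReal (x ^ (α - 1)) := by
      refine setLIntegral_congr_fun measurableSet_Ioi
        (fun x hx => ?_)
      rw [mem_Ioi] at hx
      rw [ENNReal.rpow_one, mul_comm (ENNReal.ofReal x)⁻¹, mul_assoc]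
      congr 1
      rw [← ENNReal.ofReal_inv_of_pos hx, ← ENNReal.ofReal_mul (inv_nonneg.2 hx.le)]
      congr 1
      rw [← Real.rpow_neg_one x, ← Real.rpow_add hx]
      congr 1; ring
    rw [h1, step2 f hf (by linarith : α - 1 < -1)]
    have e1 : α - 1 + 1 = α := by ring
    have e2 : (-(α - 1 + 1))⁻¹ = (1 / (1 - 1 - α)) ^ (1:ℝ) := by
      rw [Real.rpow_one]; rw [e1]; ring
    rw [e1]  -- careful: e1 rewrite inside
    simp only [ENNReal.rpow_one]
    apply le_of_eq
    congr 1
    congr 1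
    rw [Real.rpow_one]
    ring
  · -- 1 < p
    have hp0 : 0 < p := by linarith
    have hd : (0:ℝ) < p - 1 - α := by linarith
    set q : ℝ := p / (p - 1) with hq
    have hpq : p.HolderConjugate q := Real.HolderConjugate.conjExponent hp1
    set b : ℝ := (1 + α) / p with hb
    set a : ℝ := (p - 1) * b with ha
    set E : ℝ := (1 - b) * (p - 1) + α - p with hE
    set K : ℝ := p / (p - 1 - α) with hK
    have hK0 : 0 < K := by positivity
    have hb1 : b < 1 := by rw [hb, div_lt_one hp0]; linarith
    have h1b : 1 - b = (p - 1 - α) / p := by rw [hb]; field_simp; ring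
    have h1b0 : 0 < 1 - b := by linarith
    have hpne : p ≠ 0 := hp0.ne'
    have hp1ne : p - 1 ≠ 0 := by linarith
    have hab : -(a / p) * q = -b := by
      simp only [ha, hq, hb]
      field_simp
    have hE1 : E + 1 = -((p - 1 - α) / p) := by
      simp only [hE, hb]
      field_simp
      ring
    have hElt : E < -1 := by
      have h2 := div_pos hd hp0
      linarith
    set g : ℝ → ENNReal := fun t => f t ^ p * ENNReal.ofReal (t ^ a) with hg
    have hgm : Measurable g := (hf.pow_const p).mul (meas_ofReal_rpow a)
    -- pointwise Hölder
    have key : ∀ x : ℝ, 0 < x →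
        (∫⁻ t in Ioo 0 x, f t) ^ p ≤
          (∫⁻ t in Ioo 0 x, g t) * ENNReal.ofReal ((x ^ (1 - b) / (1 - b)) ^ (p - 1)) := by
      intro x hx
      have hsplit : ∫⁻ t in Ioo 0 x, f t
          = ∫⁻ t in Ioo 0 x,
              ((fun t => f t * ENNReal.ofReal (t ^ (a / p))) *
               (fun t => ENNReal.ofReal (t ^ (-(a / p))))) t := by
        refine setLIntegral_congr_fun measurableSet_Ioo
          (fun t htm => ?_)
        simp only [Pi.mul_apply]
        rw [mul_assoc, ← ENNReal.ofReal_mul (Real.rpow_nonneg htm.1.le _),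
          ← Real.rpow_add htm.1, add_neg_cancel, Real.rpow_zero, ENNReal.ofReal_one, mul_one]
      have hold := ENNReal.lintegral_mul_le_Lp_mul_Lq (volume.restrict (Ioo 0 x)) hpq
        ((hf.mul (meas_ofReal_rpow (a / p))).aemeasurable)
        ((meas_ofReal_rpow (-(a / p))).aemeasurable)
      have hf1 : ∫⁻ t in Ioo 0 x, (f t * ENNReal.ofReal (t ^ (a / p))) ^ p
          = ∫⁻ t in Ioo 0 x, g t := by
        refine setLIntegral_congr_fun measurableSet_Ioo
          (fun t htm => ?_)
        rw [hg, ENNReal.mul_rpow_of_nonneg _ _ hp0.le,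
          ENNReal.ofReal_rpow_of_pos (Real.rpow_pos_of_pos htm.1 _),
          ← Real.rpow_mul htm.1.le, div_mul_cancel₀ _ hp0.ne']
      have hf2 : ∫⁻ t in Ioo 0 x, (ENNReal.ofReal (t ^ (-(a / p)))) ^ q
          = ENNReal.ofReal (x ^ (1 - b) / (1 - b)) := by
        have hc : ∫⁻ t in Ioo 0 x, (ENNReal.ofReal (t ^ (-(a / p)))) ^ q
            = ∫⁻ t in Ioo 0 x, ENNReal.ofReal (t ^ (-b)) := by
          refine setLIntegral_congr_fun measurableSet_Ioo
            (fun t htm => ?_)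
          rw [ENNReal.ofReal_rpow_of_pos (Real.rpow_pos_of_pos htm.1 _),
            ← Real.rpow_mul htm.1.le, hab]
        rw [hc, lint_Ioo_rpow hx (by linarith : -1 < -b)]
        congr 2 <;> ring
      have hqp : (1 / q) * p = p - 1 := by
        rw [hq]; field_simp
      calc (∫⁻ t in Ioo 0 x, f t) ^ p
          = (∫⁻ t in Ioo 0 x,
              ((fun t => f t * ENNReal.ofReal (t ^ (a / p))) *
               (fun t => ENNReal.ofReal (t ^ (-(a / p))))) t) ^ p := by rw [hsplit]
        _ ≤ ((∫⁻ t in Ioo 0 x, (f t * ENNReal.ofReal (t ^ (a / p))) ^ p) ^ (1 / p) *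
             (∫⁻ t in Ioo 0 x, (ENNReal.ofReal (t ^ (-(a / p)))) ^ q) ^ (1 / q)) ^ p :=
            ENNReal.rpow_le_rpow hold hp0.le
        _ = (∫⁻ t in Ioo 0 x, g t) * ENNReal.ofReal ((x ^ (1 - b) / (1 - b)) ^ (p - 1)) := by
            rw [ENNReal.mul_rpow_of_nonneg _ _ hp0.le, ← ENNReal.rpow_mul, ← ENNReal.rpow_mul,
              one_div_mul_cancel hp0.ne', ENNReal.rpow_one, hqp, hf1, hf2,
              ENNReal.ofReal_rpow_of_nonneg
                (div_nonneg (Real.rpow_nonneg hx.le _) h1b0.le) (by linarith : (0:ℝ) ≤ p - 1)]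
    -- real identity for the weights
    have hreal : ∀ x : ℝ, 0 < x →
        (x ^ (1 - b) / (1 - b)) ^ (p - 1) * x ^ (α - p)
          = x ^ E * K ^ (p - 1) := by
      intro x hx
      rw [Real.div_rpow (Real.rpow_nonneg hx.le _) h1b0.le, ← Real.rpow_mul hx.le]
      have hKb : (1 - b) ^ (p - 1) = (K ^ (p - 1))⁻¹ := by
        rw [h1b, hK, ← Real.inv_rpow (by positivity : (0:ℝ) ≤ p / (p - 1 - α)), inv_div]
      rw [hKb, div_eq_mul_inv, inv_inv,
        show E = (1 - b) * (p - 1) + (α - p) from by rw [hE]; ring,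
        Real.rpow_add hx]
      ring
    -- pointwise bound for the full integrand
    have hmain : ∀ x ∈ Ioi (0:ℝ),
        ((ENNReal.ofReal x)⁻¹ * ∫⁻ t in Ioo (0:ℝ) x, f t) ^ p * ENNReal.ofReal (x ^ α)
          ≤ (∫⁻ t in Ioo 0 x, g t) * ENNReal.ofReal (x ^ E) * ENNReal.ofReal (K ^ (p - 1)) := by
      intro x hx
      rw [mem_Ioi] at hx
      have hw : ((ENNReal.ofReal x)⁻¹) ^ p * ENNReal.ofReal (x ^ α)
          = ENNReal.ofReal (x ^ (α - p)) := by
        rw [← ENNReal.ofReal_inv_of_pos hx, ← Real.rpow_neg_one x,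
          ENNReal.ofReal_rpow_of_pos (Real.rpow_pos_of_pos hx _),
          ← Real.rpow_mul hx.le, ← ENNReal.ofReal_mul (Real.rpow_nonneg hx.le _),
          ← Real.rpow_add hx]
        congr 1; ring
      calc ((ENNReal.ofReal x)⁻¹ * ∫⁻ t in Ioo (0:ℝ) x, f t) ^ p * ENNReal.ofReal (x ^ α)
          = (∫⁻ t in Ioo 0 x, f t) ^ p * (((ENNReal.ofReal x)⁻¹) ^ p * ENNReal.ofReal (x ^ α)) := by
            rw [ENNReal.mul_rpow_of_nonneg _ _ hp0.le]; ring
        _ = (∫⁻ t in Ioo 0 x, f t) ^ p * ENNReal.ofReal (x ^ (α - p)) := by rw [hw]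
        _ ≤ (∫⁻ t in Ioo 0 x, g t) * ENNReal.ofReal ((x ^ (1 - b) / (1 - b)) ^ (p - 1)) *
              ENNReal.ofReal (x ^ (α - p)) :=
            mul_le_mul_of_nonneg_right (key x hx) (zero_le)
        _ = (∫⁻ t in Ioo 0 x, g t) * ENNReal.ofReal (x ^ E) * ENNReal.ofReal (K ^ (p - 1)) := by
            rw [mul_assoc, ← ENNReal.ofReal_mul
                (Real.rpow_nonneg (div_nonneg (Real.rpow_nonneg hx.le _) h1b0.le) _),
              hreal x hx, ENNReal.ofReal_mul (Real.rpow_nonneg hx.le _), ← mul_assoc]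
    -- integrate
    calc ∫⁻ x in Ioi (0:ℝ),
            ((ENNReal.ofReal x)⁻¹ * ∫⁻ t in Ioo (0:ℝ) x, f t) ^ p * ENNReal.ofReal (x ^ α)
        ≤ ∫⁻ x in Ioi (0:ℝ),
            (∫⁻ t in Ioo 0 x, g t) * ENNReal.ofReal (x ^ E) * ENNReal.ofReal (K ^ (p - 1)) :=
          lintegral_mono_ae ((ae_restrict_mem measurableSet_Ioi).mono fun x hx => hmain x hx)
      _ = (∫⁻ x in Ioi (0:ℝ), (∫⁻ t in Ioo 0 x, g t) * ENNReal.ofReal (x ^ E)) *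
            ENNReal.ofReal (K ^ (p - 1)) :=
          lintegral_mul_const' _ _ ENNReal.ofReal_ne_top
      _ = (ENNReal.ofReal (-(E + 1))⁻¹ *
            ∫⁻ t in Ioi (0:ℝ), g t * ENNReal.ofReal (t ^ (E + 1))) *
            ENNReal.ofReal (K ^ (p - 1)) := by rw [step2 g hgm hElt]
      _ = ENNReal.ofReal ((p / (p - 1 - α)) ^ p) *
            ∫⁻ x in Ioi (0:ℝ), f x ^ p * ENNReal.ofReal (x ^ α) := by
          have harith : a + (E + 1) = α := by
            rw [hE1]; simp only [ha, hb]; field_simp; ring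
          have hI : ∫⁻ t in Ioi (0:ℝ), g t * ENNReal.ofReal (t ^ (E + 1))
              = ∫⁻ x in Ioi (0:ℝ), f x ^ p * ENNReal.ofReal (x ^ α) := by
            refine setLIntegral_congr_fun measurableSet_Ioi
              (fun t ht => ?_)
            rw [mem_Ioi] at ht
            simp only [hg]
            rw [mul_assoc, ← ENNReal.ofReal_mul (Real.rpow_nonneg ht.le _),
              ← Real.rpow_add ht, harith]
          have hc : (-(E + 1))⁻¹ = K := by rw [hE1, neg_neg, inv_div, hK]
          rw [hI, hc, mul_comm (ENNReal.ofReal K), mul_assoc,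
            ← ENNReal.ofReal_mul hK0.le,
            show K * K ^ (p - 1) = K ^ p from by
              nth_rw 1 [← Real.rpow_one K]
              rw [← Real.rpow_add hK0]
              norm_num,
            mul_comm]
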